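/- For all r₁,r₂,r₃,r₄ > 0: the function N is strictly positive on the open square S, G is differentiable on S, and for every (a₁,a₂) ∈ S the gradient of G vanishes at (a₁,a₂) if and only if P(a₁,a₂) = 0 and Q(a₁,a₂) = 0. -/

import Mathlib

noncomputable section

/-- `K = r₁ + r₃ − r₂ − r₄`. -/
def Kq (r₁ r₂ r₃ r₄ : ℝ) : ℝ := r₁ + r₃ - r₂ - r₄

/-- `N(a₁,a₂) = a₁a₂K + a₁(K+2(r₂−r₃)) + a₂(K+2(r₄−r₃)) + K + 2(r₂+r₄)`. -/
def Nq (r₁ r₂ r₃ r₄ a₁ a₂ : ℝ) : ℝ :=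
  a₁ * a₂ * Kq r₁ r₂ r₃ r₄ + a₁ * (Kq r₁ r₂ r₃ r₄ + 2 * (r₂ - r₃)) +
    a₂ * (Kq r₁ r₂ r₃ r₄ + 2 * (r₄ - r₃)) + Kq r₁ r₂ r₃ r₄ + 2 * (r₂ + r₄)

/-- `P(a₁,a₂) = 3(1−a₁²)·∂N/∂a₁ + 2a₁·N`, where `∂N/∂a₁ = a₂K + K + 2(r₂−r₃)`. -/
def Pq (r₁ r₂ r₃ r₄ a₁ a₂ : ℝ) : ℝ :=
  3 * (1 - a₁ ^ 2) * (a₂ * Kq r₁ r₂ r₃ r₄ + (Kq r₁ r₂ r₃ r₄ + 2 * (r₂ - r₃))) +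
    2 * a₁ * Nq r₁ r₂ r₃ r₄ a₁ a₂

/-- `Q(a₁,a₂) = 3(1−a₂²)·∂N/∂a₂ + 2a₂·N`, where `∂N/∂a₂ = a₁K + K + 2(r₄−r₃)`. -/
def Qq (r₁ r₂ r₃ r₄ a₁ a₂ : ℝ) : ℝ :=
  3 * (1 - a₂ ^ 2) * (a₁ * Kq r₁ r₂ r₃ r₄ + (Kq r₁ r₂ r₃ r₄ + 2 * (r₄ - r₃))) +
    2 * a₂ * Nq r₁ r₂ r₃ r₄ a₁ a₂

/-- The open square `S = {(a₁,a₂) : |a₁| < 1, |a₂| < 1}`. -/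
def Sq : Set (ℝ × ℝ) := {a | |a.1| < 1 ∧ |a.2| < 1}

/-- `G(a₁,a₂) = N(a₁,a₂)³ / ((1−a₁²)(1−a₂²))` on `S`. -/
def Gq (r₁ r₂ r₃ r₄ : ℝ) (a : ℝ × ℝ) : ℝ :=
  Nq r₁ r₂ r₃ r₄ a.1 a.2 ^ 3 / ((1 - a.1 ^ 2) * (1 - a.2 ^ 2))

lemma sliceDeriv (r₁ r₂ r₃ r₄ a₁ a₂ : ℝ) (h1 : (1:ℝ) - a₁ ^ 2 ≠ 0) (h2 : (1:ℝ) - a₂ ^ 2 ≠ 0) :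
    HasDerivAt (fun t => Gq r₁ r₂ r₃ r₄ (t, a₂))
      (Nq r₁ r₂ r₃ r₄ a₁ a₂ ^ 2 * Pq r₁ r₂ r₃ r₄ a₁ a₂ / ((1 - a₁ ^ 2) ^ 2 * (1 - a₂ ^ 2)))
      a₁ := by
  have hlin : HasDerivAt (fun t : ℝ => Nq r₁ r₂ r₃ r₄ t a₂)
      (a₂ * Kq r₁ r₂ r₃ r₄ + (Kq r₁ r₂ r₃ r₄ + 2 * (r₂ - r₃))) a₁ := by
    have hfun : (fun t : ℝ => Nq r₁ r₂ r₃ r₄ t a₂)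
        = fun t : ℝ => t * (a₂ * Kq r₁ r₂ r₃ r₄ + (Kq r₁ r₂ r₃ r₄ + 2 * (r₂ - r₃)))
            + (a₂ * (Kq r₁ r₂ r₃ r₄ + 2 * (r₄ - r₃)) + Kq r₁ r₂ r₃ r₄ + 2 * (r₂ + r₄)) := by
      funext t; unfold Nq; ring
    rw [hfun]
    simpa using ((hasDerivAt_id a₁).mul_const
        (a₂ * Kq r₁ r₂ r₃ r₄ + (Kq r₁ r₂ r₃ r₄ + 2 * (r₂ - r₃)))).add_const
        (a₂ * (Kq r₁ r₂ r₃ r₄ + 2 * (r₄ - r₃)) + Kq r₁ r₂ r₃ r₄ + 2 * (r₂ + r₄))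
  have hnum : HasDerivAt (fun t : ℝ => Nq r₁ r₂ r₃ r₄ t a₂ ^ 3)
      (3 * Nq r₁ r₂ r₃ r₄ a₁ a₂ ^ 2
        * (a₂ * Kq r₁ r₂ r₃ r₄ + (Kq r₁ r₂ r₃ r₄ + 2 * (r₂ - r₃)))) a₁ := by
    simpa using hlin.fun_pow 3
  have hden : HasDerivAt (fun t : ℝ => (1 - t ^ 2) * (1 - a₂ ^ 2))
      (-(2 * a₁) * (1 - a₂ ^ 2)) a₁ := by
    simpa using ((hasDerivAt_pow 2 a₁).const_sub 1).mul_const (1 - a₂ ^ 2)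
  have hquot := hnum.fun_div hden (mul_ne_zero h1 h2)
  refine hquot.congr_deriv ?_
  unfold Pq
  field_simp
  ring

lemma Nsymm (r₁ r₂ r₃ r₄ x y : ℝ) : Nq r₁ r₄ r₃ r₂ x y = Nq r₁ r₂ r₃ r₄ y x := by
  unfold Nq Kq; ring

lemma Psymm (r₁ r₂ r₃ r₄ x y : ℝ) : Pq r₁ r₄ r₃ r₂ x y = Qq r₁ r₂ r₃ r₄ y x := by
  unfold Pq Qq Nq Kq; ring

/-- For all `r₁,r₂,r₃,r₄ > 0`: `N` is strictly positive on the open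
square `S`, `G` is differentiable on `S`, and for every `(a₁,a₂) ∈ S` the gradient of `G`
vanishes at `(a₁,a₂)` if and only if `P(a₁,a₂) = 0` and `Q(a₁,a₂) = 0`. -/
theorem stmt14 (r₁ r₂ r₃ r₄ : ℝ)
    (hr₁ : 0 < r₁) (hr₂ : 0 < r₂) (hr₃ : 0 < r₃) (hr₄ : 0 < r₄) :
    (∀ a ∈ Sq, 0 < Nq r₁ r₂ r₃ r₄ a.1 a.2) ∧
      (∀ a ∈ Sq, DifferentiableAt ℝ (Gq r₁ r₂ r₃ r₄) a) ∧
      ∀ a ∈ Sq,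
        (fderiv ℝ (Gq r₁ r₂ r₃ r₄) a = 0 ↔
          Pq r₁ r₂ r₃ r₄ a.1 a.2 = 0 ∧ Qq r₁ r₂ r₃ r₄ a.1 a.2 = 0) := by
  have hNpos : ∀ a ∈ Sq, 0 < Nq r₁ r₂ r₃ r₄ a.1 a.2 := by
    rintro ⟨a₁, a₂⟩ ⟨h1, h2⟩
    rw [abs_lt] at h1 h2
    have t1 : (0:ℝ) < 1 + a₁ := by linarith [h1.1]
    have t2 : (0:ℝ) < 1 - a₁ := by linarith [h1.2]
    have t3 : (0:ℝ) < 1 + a₂ := by linarith [h2.1]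
    have t4 : (0:ℝ) < 1 - a₂ := by linarith [h2.2]
    have := mul_pos hr₁ (mul_pos t1 t3)
    have := mul_pos hr₂ (mul_pos t1 t4)
    have := mul_pos hr₃ (mul_pos t2 t4)
    have := mul_pos hr₄ (mul_pos t2 t3)
    unfold Nq Kq
    nlinarith
  have hdiff : ∀ a ∈ Sq, DifferentiableAt ℝ (Gq r₁ r₂ r₃ r₄) a := by
    rintro ⟨a₁, a₂⟩ ⟨h1, h2⟩
    rw [abs_lt] at h1 h2
    have e1 : (0:ℝ) < 1 - a₁ ^ 2 := by nlinarith [h1.1, h1.2]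
    have e2 : (0:ℝ) < 1 - a₂ ^ 2 := by nlinarith [h2.1, h2.2]
    have hN3 : DifferentiableAt ℝ (fun a : ℝ × ℝ => Nq r₁ r₂ r₃ r₄ a.1 a.2 ^ 3) (a₁, a₂) := by
      unfold Nq Kq; fun_prop
    have hDen : DifferentiableAt ℝ (fun a : ℝ × ℝ => (1 - a.1 ^ 2) * (1 - a.2 ^ 2)) (a₁, a₂) := by
      fun_prop
    have hne : (1 - ((a₁, a₂) : ℝ × ℝ).1 ^ 2) * (1 - ((a₁, a₂) : ℝ × ℝ).2 ^ 2) ≠ 0 :=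
      (by positivity : (0:ℝ) < (1 - a₁ ^ 2) * (1 - a₂ ^ 2)).ne'
    have hGeq : Gq r₁ r₂ r₃ r₄
        = fun a : ℝ × ℝ => Nq r₁ r₂ r₃ r₄ a.1 a.2 ^ 3 * ((1 - a.1 ^ 2) * (1 - a.2 ^ 2))⁻¹ :=
      funext fun a => div_eq_mul_inv _ _
    rw [hGeq]
    exact hN3.mul (hDen.inv hne)
  refine ⟨hNpos, hdiff, ?_⟩
  rintro ⟨a₁, a₂⟩ ha
  have hNp : 0 < Nq r₁ r₂ r₃ r₄ a₁ a₂ := hNpos _ ha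
  have hd := (hdiff _ ha).hasFDerivAt
  obtain ⟨h1, h2⟩ := ha
  rw [abs_lt] at h1 h2
  have e1 : (0:ℝ) < 1 - a₁ ^ 2 := by nlinarith [h1.1, h1.2]
  have e2 : (0:ℝ) < 1 - a₂ ^ 2 := by nlinarith [h2.1, h2.2]
  set L := fderiv ℝ (Gq r₁ r₂ r₃ r₄) (a₁, a₂) with hL
  -- partial derivative in the first coordinate
  have line1 : HasDerivAt (fun t : ℝ => ((t, a₂) : ℝ × ℝ)) ((1 : ℝ), (0 : ℝ)) a₁ :=
    (hasDerivAt_id a₁).prodMk (hasDerivAt_const a₁ a₂)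
  have hp1 : HasDerivAt (fun t => Gq r₁ r₂ r₃ r₄ (t, a₂)) (L (1, 0)) a₁ :=
    (hd.comp_hasDerivAt a₁ line1 :)
  have eq1 : L (1, 0)
      = Nq r₁ r₂ r₃ r₄ a₁ a₂ ^ 2 * Pq r₁ r₂ r₃ r₄ a₁ a₂
        / ((1 - a₁ ^ 2) ^ 2 * (1 - a₂ ^ 2)) :=
    hp1.unique (sliceDeriv r₁ r₂ r₃ r₄ a₁ a₂ e1.ne' e2.ne')
  -- partial derivative in the second coordinate
  have line2 : HasDerivAt (fun t : ℝ => ((a₁, t) : ℝ × ℝ)) ((0 : ℝ), (1 : ℝ)) a₂ :=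
    (hasDerivAt_const a₂ a₁).prodMk (hasDerivAt_id a₂)
  have hp2 : HasDerivAt (fun t => Gq r₁ r₂ r₃ r₄ (a₁, t)) (L (0, 1)) a₂ :=
    hd.comp_hasDerivAt a₂ line2
  have hs2 := sliceDeriv r₁ r₄ r₃ r₂ a₂ a₁ e2.ne' e1.ne'
  have hGsymm : (fun t => Gq r₁ r₄ r₃ r₂ (t, a₁)) = fun t => Gq r₁ r₂ r₃ r₄ (a₁, t) := by
    funext t; unfold Gq Nq Kq; ring
  rw [hGsymm] at hs2
  have eq2 : L (0, 1)
      = Nq r₁ r₂ r₃ r₄ a₁ a₂ ^ 2 * Qq r₁ r₂ r₃ r₄ a₁ a₂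
        / ((1 - a₂ ^ 2) ^ 2 * (1 - a₁ ^ 2)) := by
    rw [hp2.unique hs2, Nsymm, Psymm]
  have hN2 : Nq r₁ r₂ r₃ r₄ a₁ a₂ ^ 2 ≠ 0 := pow_ne_zero _ hNp.ne'
  constructor
  · intro h0
    rw [h0] at eq1 eq2
    simp only [ContinuousLinearMap.zero_apply] at eq1 eq2
    constructor
    · have := eq1.symm
      rw [div_eq_zero_iff] at this
      rcases this with h | h
      · exact (mul_eq_zero.1 h).resolve_left hN2
      · exact absurd h (by positivity)
    · have := eq2.symm
      rw [div_eq_zero_iff] at this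
      rcases this with h | h
      · exact (mul_eq_zero.1 h).resolve_left hN2
      · exact absurd h (by positivity)
  · rintro ⟨hP, hQ⟩
    rw [hP] at eq1
    rw [hQ] at eq2
    simp only [mul_zero, zero_div] at eq1 eq2
    refine ContinuousLinearMap.ext fun v => ?_
    have hv : v = v.1 • ((1 : ℝ), (0 : ℝ)) + v.2 • ((0 : ℝ), (1 : ℝ)) := by
      simp [Prod.ext_iff]
    rw [hv, map_add, map_smul, map_smul, eq1, eq2]
    simp
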